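/- Let K be a compact convex set in ℝⁿ with nonempty interior, and suppose there is a direct sum decomposition ℝⁿ = ξ ⊕ ξ′ into nonzero subspaces such that every outer unit normal at a regular boundary point of K lies either in ξ or in ξ′. Then there exists a direct sum decomposition ℝⁿ = η ⊕ η′ with dim η = dim ξ and dim η′ = dim ξ′, and compact convex sets K₁ ⊆ η and K₂ ⊆ η′, such that K = K₁ + K₂ (Minkowski sum). -/

import Mathlib

open scoped Pointwise RealInnerProductSpace
noncomputable section

/-- Abbreviation for n-dimensional Euclidean space. -/
abbrev Euc (n : ℕ) := EuclideanSpace ℝ (Fin n)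

/-- The translate K + v of a set K by a vector v. -/
def transl {n : ℕ} (K : Set (Euc n)) (v : Euc n) : Set (Euc n) := (fun x => x + v) '' K

/-- Orthogonal projection of a set onto a subspace ξ, viewed inside the ambient space. -/
def projSet {n : ℕ} (ξ : Submodule ℝ (Euc n)) (K : Set (Euc n)) : Set (Euc n) :=
  (fun x => (Submodule.orthogonalProjectionOnto ξ x : Euc n)) '' K

/-- A simplicial family of size m+1: distinct unit vectors spanning an m-dimensional
subspace, some positive combination of which vanishes (the outer unit normals of an
m-dimensional simplex). -/
def SimplicialFamily {n : ℕ} (m : ℕ) (u : Fin (m + 1) → Euc n) : Prop :=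
  Function.Injective u ∧ (∀ i, ‖u i‖ = 1) ∧
    Module.finrank ℝ (Submodule.span ℝ (Set.range u)) = m ∧
    ∃ c : Fin (m + 1) → ℝ, (∀ i, 0 < c i) ∧ ∑ i, c i • u i = 0

/-- L is d-reliable: whenever every projection of L onto a d-dimensional subspace contains
a translate of the corresponding projection of a compact convex set K, L contains a
translate of K. -/
def DReliable {n : ℕ} (d : ℕ) (L : Set (Euc n)) : Prop :=
  ∀ K : Set (Euc n), IsCompact K → Convex ℝ K → K.Nonempty →
    (∀ ξ : Submodule ℝ (Euc n), Module.finrank ℝ ξ = d →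
      ∃ w, transl (projSet ξ K) w ⊆ projSet ξ L) →
    ∃ v, transl K v ⊆ L

/-- x is a regular boundary point of L: exactly one outer unit normal at x. -/
def IsRegularPoint {n : ℕ} (L : Set (Euc n)) (x : Euc n) : Prop :=
  x ∈ frontier L ∧ ∃! u : Euc n, ‖u‖ = 1 ∧ ∀ y ∈ L, ⟪y - x, u⟫ ≤ 0

/-- u is the (unique) outer unit normal to L at the regular boundary point x. -/
def IsNormalAtRegularPoint {n : ℕ} (L : Set (Euc n)) (x u : Euc n) : Prop :=
  x ∈ frontier L ∧ ‖u‖ = 1 ∧ (∀ y ∈ L, ⟪y - x, u⟫ ≤ 0) ∧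
    ∀ w : Euc n, ‖w‖ = 1 → (∀ y ∈ L, ⟪y - x, w⟫ ≤ 0) → w = u

/-- The support set of P in direction u. -/
def supportSet {n : ℕ} (P : Set (Euc n)) (u : Euc n) : Set (Euc n) :=
  {x ∈ P | ∀ y ∈ P, ⟪y, u⟫ ≤ ⟪x, u⟫}

/-- u is an outer unit facet normal of P: the support set of P in direction u is a face of
codimension 1 in the affine hull of P. -/
def IsFacetNormal {n : ℕ} (P : Set (Euc n)) (u : Euc n) : Prop :=
  ‖u‖ = 1 ∧ Module.finrank ℝ (vectorSpan ℝ (supportSet P u)) + 1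
      = Module.finrank ℝ (vectorSpan ℝ P)

/-- S is a k-dimensional simplex: the convex hull of k+1 affinely independent points. -/
def IsSimplexOfDim {n : ℕ} (k : ℕ) (S : Set (Euc n)) : Prop :=
  ∃ p : Fin (k + 1) → Euc n, AffineIndependent ℝ p ∧ S = convexHull ℝ (Set.range p)

/-- C is d-decomposable: a direct Minkowski sum of at least two nonempty compact convex
sets lying in complementary subspaces of dimension at most d. -/
def DDecomposable {n : ℕ} (d : ℕ) (C : Set (Euc n)) : Prop :=
  ∃ (m : ℕ) (ξ : Fin m → Submodule ℝ (Euc n)) (Cs : Fin m → Set (Euc n)),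
    2 ≤ m ∧ iSupIndep ξ ∧ (⨆ i, ξ i) = ⊤ ∧
    (∀ i, Module.finrank ℝ (ξ i) ≤ d) ∧
    (∀ i, (Cs i).Nonempty ∧ IsCompact (Cs i) ∧ Convex ℝ (Cs i) ∧ Cs i ⊆ (ξ i : Set (Euc n))) ∧
    C = ∑ i, Cs i

/-- C is a d-decomposable orthogonal simplex product: a direct Minkowski sum of simplices of
dimension at most d lying in mutually orthogonal complementary subspaces of dimension at
most d. -/
def OrthSimplexProduct {n : ℕ} (d : ℕ) (C : Set (Euc n)) : Prop :=
  ∃ (m : ℕ) (ξ : Fin m → Submodule ℝ (Euc n)) (Cs : Fin m → Set (Euc n)),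
    2 ≤ m ∧ iSupIndep ξ ∧ (⨆ i, ξ i) = ⊤ ∧
    (∀ i, Module.finrank ℝ (ξ i) ≤ d) ∧
    (∀ i j, i ≠ j → ∀ x ∈ ξ i, ∀ y ∈ ξ j, ⟪x, y⟫ = 0) ∧
    (∀ i, Cs i ⊆ (ξ i : Set (Euc n)) ∧ ∃ k ≤ d, IsSimplexOfDim k (Cs i)) ∧
    C = ∑ i, Cs i

section SplitAux


/-- Strict separation of a point from a closed convex set, inner-product form. -/
lemma exists_sep {n : ℕ} {s : Set (Euc n)} (hs : Convex ℝ s) (hsc : IsClosed s) {z : Euc n}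
    (hz : z ∉ s) : ∃ v : Euc n, ∃ b : ℝ, (∀ a ∈ s, ⟪a, v⟫ ≤ b) ∧ b < ⟪z, v⟫ := by
  obtain ⟨f, u, hfa, hfz⟩ := geometric_hahn_banach_closed_point hs hsc hz
  refine ⟨(InnerProductSpace.toDual ℝ (Euc n)).symm f, u, fun a ha => ?_, ?_⟩
  · rw [real_inner_comm, InnerProductSpace.toDual_symm_apply]
    exact (hfa a ha).le
  · rw [real_inner_comm, InnerProductSpace.toDual_symm_apply]
    exact hfz

/-- Our bespoke notion of exposed point. -/
def ExpPt {n : ℕ} (s : Set (Euc n)) (p : Euc n) : Prop :=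
  p ∈ s ∧ ∃ w : Euc n, ∀ y ∈ s, ⟪y, w⟫ ≤ ⟪p, w⟫ ∧ (⟪y, w⟫ = ⟪p, w⟫ → y = p)

lemma farthest_exposed {n : ℕ} {s : Set (Euc n)} (hsc : IsCompact s) (hne : s.Nonempty)
    (z : Euc n) : ∃ f ∈ s, (∀ y ∈ s, ‖y - z‖ ≤ ‖f - z‖) ∧ ExpPt s f := by
  obtain ⟨f, hf, hmax⟩ := hsc.exists_isMaxOn hne
    (((continuous_id.sub continuous_const).norm).continuousOn)
  have hmax' : ∀ y ∈ s, ‖y - z‖ ≤ ‖f - z‖ := fun y hy => hmax hy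
  refine ⟨f, hf, hmax', hf, f - z, fun y hy => ?_⟩
  have hle : ‖y - z‖ ≤ ‖f - z‖ := hmax' y hy
  have hexp : ‖y - z‖ ^ 2 = ‖y - f‖ ^ 2 + 2 * ⟪y - f, f - z⟫ + ‖f - z‖ ^ 2 := by
    have h1 : y - z = (y - f) + (f - z) := by abel
    rw [h1, norm_add_sq_real]
  have key : 2 * ⟪y - f, f - z⟫ ≤ -‖y - f‖ ^ 2 := by
    nlinarith [norm_nonneg (y - z), norm_nonneg (f - z)]
  have h2 : ⟪y, f - z⟫ - ⟪f, f - z⟫ = ⟪y - f, f - z⟫ := (inner_sub_left _ _ _).symm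
  constructor
  · nlinarith [sq_nonneg ‖y - f‖]
  · intro heq
    have h3 : ⟪y - f, f - z⟫ = 0 := by rw [← h2, heq]; ring
    have h4 : ‖y - f‖ ^ 2 ≤ 0 := by nlinarith
    have : ‖y - f‖ = 0 := by nlinarith [norm_nonneg (y - f)]
    have := norm_eq_zero.mp this
    rw [sub_eq_zero] at this
    exact this

lemma isCompact_convexJoin {n : ℕ} {s t : Set (Euc n)} (hs : IsCompact s) (ht : IsCompact t) :
    IsCompact (convexJoin ℝ s t) := by
  have himg : convexJoin ℝ s t =
      (fun p : ℝ × Euc n × Euc n => (1 - p.1) • p.2.1 + p.1 • p.2.2) ''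
        (Set.Icc (0:ℝ) 1 ×ˢ s ×ˢ t) := by
    ext x
    constructor
    · intro hx
      obtain ⟨a, ha, b, hb, hseg⟩ := mem_convexJoin.mp hx
      rw [segment_eq_image] at hseg
      obtain ⟨θ, hθ, hθx⟩ := hseg
      exact ⟨⟨θ, a, b⟩, ⟨hθ, ha, hb⟩, hθx⟩
    · rintro ⟨⟨θ, a, b⟩, ⟨hθ, ha, hb⟩, rfl⟩
      exact mem_convexJoin.mpr ⟨a, ha, b, hb, segment_eq_image ℝ a b ▸ ⟨θ, hθ, rfl⟩⟩
  rw [himg]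
  exact ((isCompact_Icc.prod (hs.prod ht)).image (by fun_prop))

/-- Covering principle: a compact convex set all of whose exposed points lie in a compact
convex set M is contained in M. -/
lemma subset_of_expPt {n : ℕ} {s M : Set (Euc n)} (hsc : IsCompact s)
    (hMc : IsCompact M) (hMconv : Convex ℝ M) (hMs : M ⊆ s)
    (hexp : ∀ p, ExpPt s p → p ∈ M) : s ⊆ M := by
  intro q hq
  by_contra hqM
  have hsne : s.Nonempty := ⟨q, hq⟩
  have hMne : M.Nonempty := by
    obtain ⟨f, _, _, hfe⟩ := farthest_exposed hsc hsne 0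
    exact ⟨f, hexp f hfe⟩
  obtain ⟨v, b, hvb, hbq⟩ := exists_sep hMconv hMc.isClosed hqM
  -- bound on distances from q within M
  obtain ⟨D, hD⟩ := (hMc.isBounded.subset_closedBall q).imp (fun D h => h)
  set γ : ℝ := ⟪q, v⟫ - b with hγdef
  have hγ : 0 < γ := sub_pos.mpr hbq
  -- choose t
  set t : ℝ := (D ^ 2 + 1) / (2 * γ) with htdef
  have ht : 0 < t := by positivity
  set z : Euc n := q - t • v with hzdef
  obtain ⟨f, hfs, hfar, hfe⟩ := farthest_exposed hsc hsne z
  have hfM : f ∈ M := hexp f hfe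
  have hfq : ‖q - z‖ ≤ ‖f - z‖ := hfar q hq
  have hfz : f - z = (f - q) + t • v := by simp [hzdef]; abel
  have hDf : ‖f - q‖ ≤ D := by
    have := hD hfM
    simpa [Metric.mem_closedBall, dist_eq_norm] using this
  have hfv : ⟪f - q, v⟫ ≤ -γ := by
    have := hvb f hfM
    rw [inner_sub_left]
    simp only [hγdef]
    linarith
  have hcalc : ‖f - z‖ ^ 2 = ‖f - q‖ ^ 2 + 2 * t * ⟪f - q, v⟫ + t ^ 2 * ‖v‖ ^ 2 := by
    rw [hfz, norm_add_sq_real, real_inner_smul_right, norm_smul]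
    simp [abs_of_pos ht]
    ring
  have hqz : ‖q - z‖ ^ 2 = t ^ 2 * ‖v‖ ^ 2 := by
    have : q - z = t • v := by simp [hzdef]
    rw [this, norm_smul]
    simp [abs_of_pos ht]
    ring
  have h2tγ : 2 * t * γ = D ^ 2 + 1 := by
    rw [htdef]; field_simp
  have hlt : ‖f - z‖ ^ 2 < ‖q - z‖ ^ 2 := by
    rw [hcalc, hqz]
    nlinarith [hDf, hfv, norm_nonneg (f - q), sq_nonneg D]
  have : ‖f - z‖ ^ 2 ≥ ‖q - z‖ ^ 2 := by
    have h0 : (0:ℝ) ≤ ‖f - z‖ := norm_nonneg _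
    nlinarith [norm_nonneg (q - z)]
  linarith

end SplitAux

set_option maxHeartbeats 2000000 in
/-- If every outer unit normal at a regular boundary point of a full-dimensional compact
convex set K lies in one of two complementary subspaces ξ, ξ′, then K decomposes as a
direct Minkowski sum K₁ + K₂ with respect to some direct sum decomposition ℝⁿ = η ⊕ η′
with dim η = dim ξ and dim η′ = dim ξ′. -/
theorem body_splits_along_regular_normals {n : ℕ} (K : Set (Euc n))
    (hKc : IsCompact K) (hKv : Convex ℝ K) (hint : (interior K).Nonempty)
    (ξ ξ' : Submodule ℝ (Euc n)) (hξ : ξ ≠ ⊥) (hξ' : ξ' ≠ ⊥)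
    (hdisj : ξ ⊓ ξ' = ⊥) (hspan : ξ ⊔ ξ' = ⊤)
    (hnormals : ∀ x u : Euc n, IsNormalAtRegularPoint K x u → u ∈ ξ ∨ u ∈ ξ') :
    ∃ η η' : Submodule ℝ (Euc n),
      Module.finrank ℝ η = Module.finrank ℝ ξ ∧
      Module.finrank ℝ η' = Module.finrank ℝ ξ' ∧
      η ⊓ η' = ⊥ ∧ η ⊔ η' = ⊤ ∧
      ∃ K₁ K₂ : Set (Euc n),
        IsCompact K₁ ∧ Convex ℝ K₁ ∧ K₁ ⊆ (η : Set (Euc n)) ∧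
        IsCompact K₂ ∧ Convex ℝ K₂ ∧ K₂ ⊆ (η' : Set (Euc n)) ∧
        K = K₁ + K₂ := by
  classical
  obtain ⟨c, hc⟩ := hint
  have hcK : c ∈ K := interior_subset hc
  have hKne : K.Nonempty := ⟨c, hcK⟩
  obtain ⟨r, hr, hrball⟩ : ∃ r > 0, Metric.ball c r ⊆ K := by
    obtain ⟨r, hr, hb⟩ := Metric.mem_nhds_iff.mp (mem_interior_iff_mem_nhds.mp hc)
    exact ⟨r, hr, hb⟩
  obtain ⟨R, hR⟩ : ∃ R, K ⊆ Metric.closedBall c R := hKc.isBounded.subset_closedBall c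
  have hRnorm : ∀ y ∈ K, ‖y - c‖ ≤ R := fun y hy => by
    simpa [dist_eq_norm] using hR hy
  -- the support function of K based at c
  set h : Euc n → ℝ := fun u => sSup ((fun y => ⟪y - c, u⟫) '' K) with hhdef
  have hbdd : ∀ u : Euc n, BddAbove ((fun y => ⟪y - c, u⟫) '' K) := fun u =>
    hKc.bddAbove_image ((continuous_id.sub continuous_const).inner continuous_const).continuousOn
  have h_le : ∀ u : Euc n, ∀ y ∈ K, ⟪y - c, u⟫ ≤ h u := fun u y hy =>
    le_csSup (hbdd u) ⟨y, hy, rfl⟩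
  have h_sup : ∀ (u : Euc n) (a : ℝ), (∀ y ∈ K, ⟪y - c, u⟫ ≤ a) → h u ≤ a := fun u a ha =>
    csSup_le (hKne.image _) (by rintro x ⟨y, hy, rfl⟩; exact ha y hy)
  have h_zero : h 0 = 0 :=
    le_antisymm (h_sup 0 0 (by simp)) (by simpa using h_le 0 c hcK)
  -- a point of K deep in direction u
  have hpt : ∀ u : Euc n, u ≠ 0 → ∃ y ∈ K, ⟪y - c, u⟫ = r / 2 * ‖u‖ := by
    intro u hu
    have hun : 0 < ‖u‖ := norm_pos_iff.mpr hu
    refine ⟨c + (r / 2 / ‖u‖) • u, hrball ?_, ?_⟩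
    · have hcoef : 0 < r / 2 / ‖u‖ := by positivity
      simp only [Metric.mem_ball, dist_eq_norm, add_sub_cancel_left, norm_smul,
        Real.norm_eq_abs, abs_of_pos hcoef]
      rw [div_mul_cancel₀ _ (ne_of_gt hun)]
      linarith
    · rw [add_sub_cancel_left, real_inner_smul_left, real_inner_self_eq_norm_sq]
      field_simp
  have h_lb : ∀ u : Euc n, r / 2 * ‖u‖ ≤ h u := by
    intro u
    rcases eq_or_ne u 0 with rfl | hu
    · simp [h_zero]
    · obtain ⟨y, hy, hval⟩ := hpt u hu
      rw [← hval]; exact h_le u y hy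
  have h_pos : ∀ u : Euc n, u ≠ 0 → 0 < h u := fun u hu =>
    lt_of_lt_of_le (mul_pos (by positivity) (norm_pos_iff.mpr hu)) (h_lb u)
  -- the polar body of K with respect to c
  set P : Set (Euc n) := {u | ∀ y ∈ K, ⟪y - c, u⟫ ≤ 1} with hPdef
  have hPiff : ∀ u : Euc n, u ∈ P ↔ h u ≤ 1 := by
    intro u
    constructor
    · exact fun hu => h_sup u 1 hu
    · intro hu y hy; exact (h_le u y hy).trans hu
  have hPconv : Convex ℝ P := by
    intro u hu v hv a b ha hb hab
    intro y hy
    have h1 := hu y hy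
    have h2 := hv y hy
    rw [inner_add_right, real_inner_smul_right, real_inner_smul_right]
    nlinarith
  have hPclosed : IsClosed P := by
    have : P = ⋂ y ∈ K, {u : Euc n | ⟪y - c, u⟫ ≤ 1} := by
      ext u; simp [hPdef, Set.mem_iInter]
    rw [this]
    exact isClosed_biInter fun y _ => isClosed_le (continuous_const.inner continuous_id) continuous_const
  have hPsub : P ⊆ Metric.closedBall 0 (2 / r) := by
    intro u hu
    have h1 : r / 2 * ‖u‖ ≤ 1 := (h_lb u).trans ((hPiff u).mp hu)
    simp only [Metric.mem_closedBall, dist_zero_right]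
    rw [le_div_iff₀ hr]
    linarith
  have hPcomp : IsCompact P :=
    (isCompact_closedBall (0 : Euc n) (2 / r)).of_isClosed_subset hPclosed hPsub
  have hP0 : (0 : Euc n) ∈ P := fun y _ => by simp
  have hsmallP : ∀ e : Euc n, ((R * ‖e‖ + 1)⁻¹) • e ∈ P := by
    intro e y hy
    have hR0 : 0 ≤ R := le_trans (by simp) (hRnorm c hcK)
    have hpos : (0:ℝ) < R * ‖e‖ + 1 := by positivity
    rw [real_inner_smul_right]
    have h1 : ⟪y - c, e⟫ ≤ R * ‖e‖ :=
      (real_inner_le_norm _ _).trans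
        (mul_le_mul_of_nonneg_right (hRnorm y hy) (norm_nonneg _))
    rw [inv_mul_le_iff₀ hpos]
    linarith
  -- Step 1 : every exposed point of P lies in ξ or ξ'
  have hexpstep : ∀ p : Euc n, ExpPt P p → p ∈ ξ ∨ p ∈ ξ' := by
    rintro p ⟨hpP, w, hw⟩
    have hw0 : w ≠ 0 := by
      rintro rfl
      obtain ⟨e, he, he0⟩ := (Submodule.ne_bot_iff ξ).mp hξ
      have hR0 : 0 ≤ R := le_trans (by simp) (hRnorm c hcK)
      have hpos : (0:ℝ) < R * ‖e‖ + 1 := by positivity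
      have h1 := (hw _ (hsmallP e)).2 (by simp)
      have h2 := (hw 0 hP0).2 (by simp)
      have h3 : (R * ‖e‖ + 1)⁻¹ • e = (0 : Euc n) := h1.trans h2.symm
      rcases smul_eq_zero.mp h3 with h4 | h4
      · exact absurd h4 (by positivity)
      · exact he0 h4
    have hR0 : 0 ≤ R := le_trans (by simp) (hRnorm c hcK)
    have hwpos : (0:ℝ) < R * ‖w‖ + 1 := by positivity
    have hα : 0 < ⟪p, w⟫ := by
      have h1 := (hw _ (hsmallP w)).1
      rw [real_inner_smul_left, real_inner_self_eq_norm_sq] at h1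
      have h2 : 0 < (R * ‖w‖ + 1)⁻¹ * ‖w‖ ^ 2 := by
        have : 0 < ‖w‖ := norm_pos_iff.mpr hw0
        positivity
      linarith
    set α : ℝ := ⟪p, w⟫ with hαdef
    set xb : Euc n := c + α⁻¹ • w with hxbdef
    have hxbc : xb - c = α⁻¹ • w := by rw [hxbdef]; abel
    have hxb_le : ∀ u : Euc n, ⟪xb - c, u⟫ ≤ h u := by
      intro u
      rcases eq_or_ne u 0 with rfl | hu0
      · simp [h_zero]
      · have hhu := h_pos u hu0
        have hq : (h u)⁻¹ • u ∈ P := by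
          intro y hy
          rw [real_inner_smul_right, inv_mul_le_iff₀ hhu, mul_one]
          exact h_le u y hy
        have h1 := (hw _ hq).1
        rw [real_inner_smul_left] at h1
        have h2 : ⟪u, w⟫ ≤ α * h u := by
          calc ⟪u, w⟫ = h u * ((h u)⁻¹ * ⟪u, w⟫) := by field_simp
            _ ≤ h u * α := mul_le_mul_of_nonneg_left h1 hhu.le
            _ = α * h u := mul_comm _ _
        rw [hxbc, real_inner_smul_left, real_inner_comm]
        calc α⁻¹ * ⟪u, w⟫ ≤ α⁻¹ * (α * h u) :=
              mul_le_mul_of_nonneg_left h2 (by positivity)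
          _ = h u := by field_simp
    have hxbK : xb ∈ K := by
      by_contra hxbK
      obtain ⟨v, b, hvb, hbx⟩ := exists_sep hKv hKc.isClosed hxbK
      have h1 : h v ≤ b - ⟪c, v⟫ := h_sup v _ (fun y hy => by
        rw [inner_sub_left]; linarith [hvb y hy])
      have h2 : b - ⟪c, v⟫ < ⟪xb - c, v⟫ := by rw [inner_sub_left]; linarith
      linarith [hxb_le v]
    have hp0 : p ≠ 0 := by
      rintro rfl
      rw [hαdef, inner_zero_left] at hα
      exact lt_irrefl 0 hα
    have hpnorm : 0 < ‖p‖ := norm_pos_iff.mpr hp0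
    have hxbp : ⟪xb - c, p⟫ = 1 := by
      rw [hxbc, real_inner_smul_left, real_inner_comm, ← hαdef]
      exact inv_mul_cancel₀ (ne_of_gt hα)
    have hxbf : xb ∈ frontier K := by
      rw [hKc.isClosed.frontier_eq]
      refine ⟨hxbK, fun hint' => ?_⟩
      obtain ⟨ε, hε, hball⟩ := Metric.mem_nhds_iff.mp (mem_interior_iff_mem_nhds.mp hint')
      have hcoef : 0 < ε / 2 / ‖p‖ := by positivity
      set y : Euc n := xb + (ε / 2 / ‖p‖) • p with hydef
      have hyK : y ∈ K := hball (by
        simp only [hydef, Metric.mem_ball, dist_eq_norm, add_sub_cancel_left, norm_smul,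
          Real.norm_eq_abs, abs_of_pos hcoef]
        rw [div_mul_cancel₀ _ (ne_of_gt hpnorm)]
        linarith)
      have h1 : ⟪y - c, p⟫ ≤ 1 := hpP y hyK
      have h2 : y - c = (xb - c) + (ε / 2 / ‖p‖) • p := by rw [hydef]; abel
      rw [h2, inner_add_left, hxbp, real_inner_smul_left, real_inner_self_eq_norm_sq] at h1
      have h3 : 0 < ε / 2 / ‖p‖ * ‖p‖ ^ 2 := by positivity
      linarith
    set u₀ : Euc n := ‖p‖⁻¹ • p with hu₀def
    have hu₀norm : ‖u₀‖ = 1 := by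
      rw [hu₀def, norm_smul, Real.norm_eq_abs, abs_of_pos (by positivity)]
      field_simp
    have hnormal : ∀ y ∈ K, ⟪y - xb, u₀⟫ ≤ 0 := by
      intro y hy
      rw [hu₀def, real_inner_smul_right]
      have h1 : ⟪y - c, p⟫ ≤ 1 := hpP y hy
      have h2 : y - xb = (y - c) - (xb - c) := by abel
      have h3 : ⟪y - xb, p⟫ ≤ 0 := by rw [h2, inner_sub_left, hxbp]; linarith
      exact mul_nonpos_of_nonneg_of_nonpos (by positivity) h3
    have huniq : ∀ v : Euc n, ‖v‖ = 1 → (∀ y ∈ K, ⟪y - xb, v⟫ ≤ 0) → v = u₀ := by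
      intro v hv hvn
      have hv0 : v ≠ 0 := by intro hh; rw [hh] at hv; simp at hv
      have hhv := h_pos v hv0
      have hhveq : h v = ⟪xb - c, v⟫ := by
        refine le_antisymm (h_sup v _ (fun y hy => ?_)) (h_le v xb hxbK)
        have hsplit : y - c = (y - xb) + (xb - c) := by abel
        rw [hsplit, inner_add_left]
        linarith [hvn y hy]
      have hqP : (h v)⁻¹ • v ∈ P := by
        intro y hy
        rw [real_inner_smul_right, inv_mul_le_iff₀ hhv, mul_one]
        exact h_le v y hy
      have hweq : w = α • (xb - c) := by
        rw [hxbc, smul_smul, mul_inv_cancel₀ (ne_of_gt hα), one_smul]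
      have hqw : ⟪(h v)⁻¹ • v, w⟫ = ⟪p, w⟫ := by
        have hvw : ⟪v, w⟫ = α * h v := by
          rw [hweq, real_inner_smul_right, real_inner_comm, ← hhveq]
        rw [real_inner_smul_left, hvw, ← hαdef, mul_comm α (h v), ← mul_assoc,
          inv_mul_cancel₀ (ne_of_gt hhv), one_mul]
      have hqp := (hw _ hqP).2 hqw
      have hveq : v = (h v) • p := by
        rw [← hqp, smul_smul, mul_inv_cancel₀ (ne_of_gt hhv), one_smul]
      have hnv : (1:ℝ) = h v * ‖p‖ := by
        have hnv2 : ‖v‖ = ‖(h v) • p‖ := by rw [← hveq]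
        rw [hv, norm_smul, Real.norm_eq_abs, abs_of_pos hhv] at hnv2
        exact hnv2
      rw [hveq, hu₀def]
      congr 1
      field_simp
      linarith [hnv]
    have hreg : IsNormalAtRegularPoint K xb u₀ := ⟨hxbf, hu₀norm, hnormal, huniq⟩
    have hpu : p = ‖p‖ • u₀ := by
      rw [hu₀def, smul_smul, mul_inv_cancel₀ (ne_of_gt hpnorm), one_smul]
    rcases hnormals xb u₀ hreg with hmem | hmem
    · left; rw [hpu]; exact ξ.smul_mem _ hmem
    · right; rw [hpu]; exact ξ'.smul_mem _ hmem
  -- Step 2 : P is contained in the convex join of its ξ-part and ξ'-part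
  set A : Set (Euc n) := (ξ : Set (Euc n)) ∩ P with hAdef
  set B : Set (Euc n) := (ξ' : Set (Euc n)) ∩ P with hBdef
  have hAc : IsCompact A :=
    hPcomp.of_isClosed_subset (ξ.closed_of_finiteDimensional.inter hPclosed)
      Set.inter_subset_right
  have hBc : IsCompact B :=
    hPcomp.of_isClosed_subset (ξ'.closed_of_finiteDimensional.inter hPclosed)
      Set.inter_subset_right
  have hAconv : Convex ℝ A := ξ.convex.inter hPconv
  have hBconv : Convex ℝ B := ξ'.convex.inter hPconv
  have hA0 : (0 : Euc n) ∈ A := ⟨ξ.zero_mem, hP0⟩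
  have hB0 : (0 : Euc n) ∈ B := ⟨ξ'.zero_mem, hP0⟩
  set M : Set (Euc n) := convexJoin ℝ A B with hMdef
  have hMc : IsCompact M := isCompact_convexJoin hAc hBc
  have hMconv : Convex ℝ M := hAconv.convexJoin hBconv
  have hMP : M ⊆ P := convexJoin_subset Set.inter_subset_right Set.inter_subset_right hPconv
  have hPM : P ⊆ M := by
    refine subset_of_expPt hPcomp hMc hMconv hMP (fun p hp => ?_)
    rcases hexpstep p hp with hmem | hmem
    · exact subset_convexJoin_left ⟨0, hB0⟩ ⟨hmem, hp.1⟩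
    · exact subset_convexJoin_right ⟨0, hA0⟩ ⟨hmem, hp.1⟩
  -- Step 3 : superadditivity of the support function across the splitting
  have haddkey : ∀ u₁ ∈ ξ, ∀ u₂ ∈ ξ', h u₁ + h u₂ ≤ h (u₁ + u₂) := by
    intro u₁ hu₁ u₂ hu₂
    rcases eq_or_ne (u₁ + u₂) 0 with hsum | hsum
    · have hmem : u₁ ∈ ξ ⊓ ξ' := by
        refine ⟨hu₁, ?_⟩
        have : u₁ = -u₂ := eq_neg_of_add_eq_zero_left hsum
        rw [this]; exact ξ'.neg_mem hu₂
      rw [hdisj, Submodule.mem_bot] at hmem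
      have hu20 : u₂ = 0 := by rwa [hmem, zero_add] at hsum
      rw [hmem, hu20]
      simp [h_zero]
    · set lam : ℝ := h (u₁ + u₂) with hlamdef
      have hlam : 0 < lam := h_pos _ hsum
      have hvP : lam⁻¹ • (u₁ + u₂) ∈ P := by
        intro y hy
        rw [real_inner_smul_right, inv_mul_le_iff₀ hlam, mul_one]
        exact h_le _ y hy
      obtain ⟨a, ha, b, hb, hseg⟩ := mem_convexJoin.mp (hPM hvP)
      obtain ⟨s, t, hs, ht, hst, hstv⟩ := hseg
      have hdecomp : u₁ + u₂ = (lam * s) • a + (lam * t) • b := by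
        have h1 : lam • (s • a + t • b) = u₁ + u₂ := by
          rw [hstv, smul_smul, mul_inv_cancel₀ (ne_of_gt hlam), one_smul]
        rw [← h1, smul_add, smul_smul, smul_smul]
      have hmem : u₁ - (lam * s) • a ∈ ξ ⊓ ξ' := by
        constructor
        · exact ξ.sub_mem hu₁ (ξ.smul_mem _ ha.1)
        · have h2 : u₁ - (lam * s) • a = (lam * t) • b - u₂ :=
            sub_eq_sub_iff_add_eq_add.mpr (hdecomp.trans (add_comm _ _))
          rw [h2]
          exact ξ'.sub_mem (ξ'.smul_mem _ hb.1) hu₂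
      rw [hdisj, Submodule.mem_bot, sub_eq_zero] at hmem
      have hu2eq : u₂ = (lam * t) • b := by
        have h4 := hdecomp
        rw [← hmem] at h4
        exact add_left_cancel h4
      have hh1 : h u₁ ≤ lam * s := by
        refine h_sup _ _ (fun y hy => ?_)
        rw [hmem, real_inner_smul_right]
        have h5 : ⟪y - c, a⟫ ≤ 1 := ha.2 y hy
        have h6 : 0 ≤ lam * s := mul_nonneg hlam.le hs
        nlinarith
      have hh2 : h u₂ ≤ lam * t := by
        refine h_sup _ _ (fun y hy => ?_)
        rw [hu2eq, real_inner_smul_right]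
        have h5 : ⟪y - c, b⟫ ≤ 1 := hb.2 y hy
        have h6 : 0 ≤ lam * t := mul_nonneg hlam.le ht
        nlinarith
      have h7 : lam * s + lam * t = lam := by rw [← mul_add, hst, mul_one]
      exact (add_le_add hh1 hh2).trans_eq h7
  -- Assemble the decomposition
  have hfin : Module.finrank ℝ ξ + Module.finrank ℝ ξ' = n := by
    have h1 := Submodule.finrank_sup_add_finrank_inf_eq ξ ξ'
    rw [hspan, hdisj, finrank_bot, finrank_top, add_zero, finrank_euclideanSpace_fin] at h1
    exact h1.symm
  have hξ'o := Submodule.finrank_add_finrank_orthogonal (K := ξ')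
  have hξo := Submodule.finrank_add_finrank_orthogonal (K := ξ)
  rw [finrank_euclideanSpace_fin] at hξ'o hξo
  refine ⟨ξ'ᗮ, ξᗮ, by omega, by omega, ?_, ?_, ?_⟩
  · rw [Submodule.inf_orthogonal, sup_comm, hspan, Submodule.top_orthogonal_eq_bot]
  · apply Submodule.eq_top_of_disjoint
    · rw [finrank_euclideanSpace_fin]; omega
    · rw [disjoint_iff, Submodule.inf_orthogonal, sup_comm, hspan,
        Submodule.top_orthogonal_eq_bot]
  · -- the two summands
    have hinf : ξ'ᗮ ⊓ ξᗮ = ⊥ := by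
      rw [Submodule.inf_orthogonal, sup_comm, hspan, Submodule.top_orthogonal_eq_bot]
    have hsup2 : ξ'ᗮ ⊔ ξᗮ = ⊤ := by
      apply Submodule.eq_top_of_disjoint
      · rw [finrank_euclideanSpace_fin]; omega
      · rw [disjoint_iff, hinf]
    have hcompl : IsCompl (ξ'ᗮ) (ξᗮ) := ⟨disjoint_iff.mpr hinf, codisjoint_iff.mpr hsup2⟩
    set pr1 : Euc n →ₗ[ℝ] Euc n :=
      (ξ'ᗮ).subtype ∘ₗ ((ξ'ᗮ).linearProjOfIsCompl (ξᗮ) hcompl) with hpr1def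
    set pr2 : Euc n →ₗ[ℝ] Euc n :=
      (ξᗮ).subtype ∘ₗ ((ξᗮ).linearProjOfIsCompl (ξ'ᗮ) hcompl.symm) with hpr2def
    have hprsum : ∀ x : Euc n, pr1 x + pr2 x = x := fun x =>
      Submodule.projection_add_projection_eq_self hcompl x
    have hpr1mem : ∀ x : Euc n, pr1 x ∈ ξ'ᗮ := fun x => SetLike.coe_mem _
    have hpr2mem : ∀ x : Euc n, pr2 x ∈ ξᗮ := fun x => SetLike.coe_mem _
    refine ⟨pr1 '' K, pr2 '' K,
      hKc.image pr1.continuous_of_finiteDimensional, hKv.linear_image pr1,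
      (by rintro _ ⟨x, hx, rfl⟩; exact hpr1mem x),
      hKc.image pr2.continuous_of_finiteDimensional, hKv.linear_image pr2,
      (by rintro _ ⟨x, hx, rfl⟩; exact hpr2mem x), ?_⟩
    apply Set.Subset.antisymm
    · intro x hx
      have := Set.add_mem_add (Set.mem_image_of_mem pr1 hx) (Set.mem_image_of_mem pr2 hx)
      rwa [hprsum x] at this
    · intro z hz
      rw [Set.mem_add] at hz
      obtain ⟨z₁, hz₁, z₂, hz₂, rfl⟩ := hz
      obtain ⟨x, hx, rfl⟩ := hz₁
      obtain ⟨y, hy, rfl⟩ := hz₂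
      by_contra hzK
      obtain ⟨v, b, hvb, hbz⟩ := exists_sep hKv hKc.isClosed hzK
      have hvtop : v ∈ ξ ⊔ ξ' := hspan ▸ Submodule.mem_top
      obtain ⟨v₁, hv₁, v₂, hv₂, hv12⟩ := Submodule.mem_sup.mp hvtop
      have horth1 : ∀ q : Euc n, ⟪pr1 q, v₂⟫ = 0 := fun q => by
        rw [real_inner_comm]
        exact (Submodule.mem_orthogonal ξ' (pr1 q)).mp (hpr1mem q) v₂ hv₂
      have horth2 : ∀ q : Euc n, ⟪pr2 q, v₁⟫ = 0 := fun q => by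
        rw [real_inner_comm]
        exact (Submodule.mem_orthogonal ξ (pr2 q)).mp (hpr2mem q) v₁ hv₁
      have h1 : ⟪pr1 x, v⟫ = ⟪x, v₁⟫ := by
        have hx1 : pr1 x = x - pr2 x := by
          rw [eq_sub_iff_add_eq]; exact hprsum x
        rw [← hv12, inner_add_right, horth1 x, add_zero, hx1, inner_sub_left,
          horth2 x, sub_zero]
      have h2 : ⟪pr2 y, v⟫ = ⟪y, v₂⟫ := by
        have hy1 : pr2 y = y - pr1 y := by
          rw [eq_sub_iff_add_eq, add_comm]; exact hprsum y
        rw [← hv12, inner_add_right, horth2 y, zero_add, hy1, inner_sub_left,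
          horth1 y, sub_zero]
      have hhv : h v ≤ b - ⟪c, v⟫ := h_sup v _ (fun w hw => by
        rw [inner_sub_left]; linarith [hvb w hw])
      have hkey : ⟪pr1 x + pr2 y - c, v⟫ ≤ h v := by
        have e1 : ⟪pr1 x + pr2 y - c, v⟫ = ⟪x - c, v₁⟫ + ⟪y - c, v₂⟫ := by
          rw [inner_sub_left, inner_add_left, h1, h2, inner_sub_left, inner_sub_left,
            ← hv12, inner_add_right]
          ring
        rw [e1]
        calc ⟪x - c, v₁⟫ + ⟪y - c, v₂⟫ ≤ h v₁ + h v₂ :=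
              add_le_add (h_le v₁ x hx) (h_le v₂ y hy)
          _ ≤ h (v₁ + v₂) := haddkey v₁ hv₁ v₂ hv₂
          _ = h v := by rw [hv12]
      rw [inner_sub_left] at hkey
      linarith
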